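/- Let p be a prime, let A be a perfect commutative ring of characteristic p, let B be a commutative ring of characteristic p, and let g : B → C be a surjective ring homomorphism onto a commutative ring C such that B is (ker g)-adically complete. Then every ring homomorphism σ : A → C lifts uniquely along g: there exists exactly one ring homomorphism h : A → B with g ∘ h = σ. -/

import Mathlib

/-- Let `p` be a prime, `A` a perfect commutative ring of characteristic `p`, `B` a
commutative ring of characteristic `p`, and `g : B → C` a surjective ring homomorphism
such that `B` is `(ker g)`-adically complete. Then every ring homomorphism `σ : A → C`
lifts uniquely along `g`. -/
theorem exists_unique_lift_of_perfect (p : ℕ) [Fact p.Prime]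
    (A B C : Type*) [CommRing A] [CommRing B] [CommRing C]
    [CharP A p] [PerfectRing A p] [CharP B p]
    (g : B →+* C) (hg : Function.Surjective g)
    [IsAdicComplete (RingHom.ker g) B]
    (σ : A →+* C) :
    ∃! h : A →+* B, g.comp h = σ := by
  classical
  have hp : p.Prime := Fact.out
  set I : Ideal B := RingHom.ker g with hI
  have hsm : ∀ (n : ℕ) (z : B), z ∈ I ^ n ↔ z ∈ (I ^ n • ⊤ : Submodule B B) := by
    intro n z
    rw [smul_eq_mul, Ideal.mul_top]
  have key : ∀ (x y : B) (n : ℕ), g x = g y → x ^ p ^ n - y ^ p ^ n ∈ I ^ (n + 1) := by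
    intro x y n hxy
    have hmem : x - y ∈ I := by
      rw [hI, RingHom.mem_ker, map_sub, sub_eq_zero]; exact hxy
    have h1 : x ^ p ^ n - y ^ p ^ n = (x - y) ^ p ^ n := (sub_pow_char_pow ..).symm
    rw [h1]
    have hle : n + 1 ≤ p ^ n := Nat.succ_le_of_lt (Nat.lt_pow_self hp.one_lt : n < p ^ n)
    exact Ideal.pow_le_pow_right hle (Ideal.pow_mem_pow hmem _)
  set s : C → B := Function.surjInv hg with hsdef
  have hs : ∀ c, g (s c) = c := fun c => Function.surjInv_eq hg c
  set φ : A →+* A := (frobeniusEquiv A p).symm.toRingHom with hφ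
  have hφp : ∀ a : A, (φ a) ^ p = a := fun a => frobeniusEquiv_symm_pow_p A p a
  have hφpow : ∀ (n : ℕ) (a : A), (φ^[n] a) ^ p ^ n = a := by
    intro n
    induction n with
    | zero => intro a; simp
    | succ n ih =>
      intro a
      rw [Function.iterate_succ_apply, pow_succ, pow_mul, ih (φ a)]
      exact hφp a
  -- the approximating sequence
  set b : A → ℕ → B := fun a n => (s (σ (φ^[n] a))) ^ p ^ n with hb
  have hgb : ∀ (a : A) (n : ℕ), g (b a n) = σ a := by
    intro a n
    rw [hb]
    simp only [map_pow, hs, ← map_pow σ, hφpow]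
  have hstep : ∀ (a : A) (n : ℕ), b a (n + 1) - b a n ∈ I ^ (n + 1) := by
    intro a n
    have hx : b a (n + 1) = ((s (σ (φ^[n + 1] a))) ^ p) ^ p ^ n := by
      rw [hb]; rw [← pow_mul, ← pow_succ']
    rw [hx]
    refine key _ _ n ?_
    rw [map_pow, hs, hs, ← map_pow σ]
    congr 1
    rw [Function.iterate_succ_apply']
    exact hφp _
  have hcau : ∀ (a : A) (m n : ℕ), m ≤ n → b a m - b a n ∈ I ^ m := by
    intro a m n hmn
    induction n, hmn using Nat.le_induction with
    | base => simp
    | succ n hmn ih =>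
      have : b a m - b a (n + 1) = (b a m - b a n) - (b a (n + 1) - b a n) := by ring
      rw [this]
      exact sub_mem ih (Ideal.pow_le_pow_right (by omega) (hstep a n))
  have hL : ∀ a : A, ∃ L : B, ∀ n, b a n ≡ L [SMOD (I ^ n • ⊤ : Submodule B B)] := by
    intro a
    refine IsPrecomplete.prec (IsAdicComplete.toIsPrecomplete (I := I)) ?_
    intro m n hmn
    rw [SModEq.sub_mem, ← hsm]
    exact hcau a m n hmn
  choose hfun hfunspec using hL
  have hdiff : ∀ (a : A) (n : ℕ), hfun a - b a n ∈ I ^ n := by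
    intro a n
    have := (hfunspec a n).symm
    rw [SModEq.sub_mem, ← hsm] at this
    exact this
  -- Hausdorff helper
  have hzero : ∀ z : B, (∀ n : ℕ, z ∈ I ^ n) → z = 0 := by
    intro z hz
    refine IsHausdorff.haus (IsAdicComplete.toIsHausdorff (I := I)) z ?_
    intro n
    rw [SModEq.zero, ← hsm]
    exact hz n
  have hgh : ∀ a : A, g (hfun a) = σ a := by
    intro a
    have h1 : hfun a - b a 1 ∈ I := by
      have := hdiff a 1; rwa [pow_one] at this
    rw [hI, RingHom.mem_ker, map_sub, sub_eq_zero] at h1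
    rw [h1, hgb]
  have hone : hfun 1 = 1 := by
    refine sub_eq_zero.mp (hzero _ ?_)
    intro n
    have h1 : hfun 1 - 1 = (hfun 1 - b 1 n) + (b 1 n - 1) := by ring
    rw [h1]
    refine add_mem (hdiff 1 n) (Ideal.pow_le_pow_right (Nat.le_succ n) ?_)
    have : b 1 n - (1 : B) ^ p ^ n ∈ I ^ (n + 1) := by
      refine key _ _ n ?_
      rw [hs, map_one, iterate_map_one, map_one]
    simpa using this
  have hadd : ∀ a a' : A, hfun (a + a') = hfun a + hfun a' := by
    intro a a'
    refine sub_eq_zero.mp (hzero _ ?_)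
    intro n
    have h1 : hfun (a + a') - (hfun a + hfun a') =
        (hfun (a + a') - b (a + a') n) - (hfun a - b a n) - (hfun a' - b a' n)
          + (b (a + a') n - (b a n + b a' n)) := by ring
    rw [h1]
    refine add_mem (sub_mem (sub_mem (hdiff _ n) (hdiff a n)) (hdiff a' n))
      (Ideal.pow_le_pow_right (Nat.le_succ n) ?_)
    have h2 : b (a + a') n -
        (s (σ (φ^[n] a)) + s (σ (φ^[n] a'))) ^ p ^ n ∈ I ^ (n + 1) := by
      refine key _ _ n ?_
      rw [map_add, hs, hs, hs, iterate_map_add, map_add]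
    rwa [add_pow_char_pow] at h2
  have hmul : ∀ a a' : A, hfun (a * a') = hfun a * hfun a' := by
    intro a a'
    refine sub_eq_zero.mp (hzero _ ?_)
    intro n
    have h1 : hfun (a * a') - hfun a * hfun a' =
        (hfun (a * a') - b (a * a') n) - (hfun a - b a n) * b a' n
          - hfun a * (hfun a' - b a' n)
          + (b (a * a') n - b a n * b a' n) := by ring
    rw [h1]
    refine add_mem (sub_mem (sub_mem (hdiff _ n)
      (Ideal.mul_mem_right _ _ (hdiff a n))) (Ideal.mul_mem_left _ _ (hdiff a' n)))
      (Ideal.pow_le_pow_right (Nat.le_succ n) ?_)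
    have h2 : b (a * a') n -
        (s (σ (φ^[n] a)) * s (σ (φ^[n] a'))) ^ p ^ n ∈ I ^ (n + 1) := by
      refine key _ _ n ?_
      rw [map_mul, hs, hs, hs, iterate_map_mul, map_mul]
    rwa [mul_pow] at h2
  have hzero' : hfun 0 = 0 := by
    have := hadd 0 0
    rw [add_zero] at this
    exact left_eq_add.mp this
  let h : A →+* B :=
    { toFun := hfun, map_one' := hone, map_mul' := hmul,
      map_zero' := hzero', map_add' := hadd }
  refine ⟨h, ?_, ?_⟩
  · ext a
    exact hgh a
  · intro h' hh'
    have hcomp : g.comp h = σ := by ext a; exact hgh a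
    ext a
    refine sub_eq_zero.mp (hzero _ ?_)
    intro n
    refine Ideal.pow_le_pow_right (Nat.le_succ n) ?_
    have h1 : h' a = (h' (φ^[n] a)) ^ p ^ n := by
      rw [← map_pow, hφpow]
    have h2 : h a = (h (φ^[n] a)) ^ p ^ n := by
      rw [← map_pow, hφpow]
    rw [h1, h2]
    refine key _ _ n ?_
    have e1 : g (h' (φ^[n] a)) = σ (φ^[n] a) := by
      rw [← RingHom.comp_apply, hh']
    have e2 : g (h (φ^[n] a)) = σ (φ^[n] a) := by
      rw [← RingHom.comp_apply, hcomp]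
    rw [e1, e2]
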